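/- Let 0 < ω < 2 and let α > 0 be such that γ = ((1+α)/α)·(ω/2) < 1. Then for every f ∈ PW_ω(ℤ), ((1−γ)/(1+α))·∑_{n∈ℤ} |f(n)|² ≤ ∑_{j even} (1/2)·|f(j) + f(j+1)|² ≤ ∑_{n∈ℤ} |f(n)|², where the middle sum runs over all even integers j. -/

import Mathlib

open MeasureTheory Real Set

set_option maxHeartbeats 1000000

/-- `f : ℤ → ℂ` belongs to the Paley–Wiener space `PW_ω(ℤ)`: it is square-summable
and the `L²` function `F` on `[−π, π)` whose Fourier coefficients are `f` (the image
of `f` under the Fourier–Plancherel unitary) vanishes a.e. on the set where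
`4·sin²(ξ/2) > ω`. -/
def IsPaleyWienerZ (ω : ℝ) (f : ℤ → ℂ) : Prop :=
  Summable (fun k : ℤ => ‖f k‖ ^ 2) ∧
  ∃ F : ℝ → ℂ,
    MemLp F 2 (volume.restrict (Ico (-π) π)) ∧
    (∀ᵐ ξ ∂(volume.restrict (Ico (-π) π)), ω < 4 * Real.sin (ξ / 2) ^ 2 → F ξ = 0) ∧
    ∀ k : ℤ, f k = ((1 / (2 * π) : ℝ) : ℂ) *
      ∫ ξ in Ico (-π) π, F ξ * Complex.exp (-(Complex.I * (k : ℂ) * (ξ : ℂ)))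

lemma int_even_add_odd {f : ℤ → ℝ} {m m' : ℝ} (he : HasSum (fun k => f (2*k)) m)
    (ho : HasSum (fun k => f (2*k+1)) m') : HasSum f (m + m') := by
  have hinj : Function.Injective (fun k : ℤ => 2*k) := fun a b h => by dsimp at h; omega
  have hinj' : Function.Injective (fun k : ℤ => 2*k+1) := fun a b h => by dsimp at h; omega
  replace he := hinj.hasSum_range_iff.2 he
  replace ho := hinj'.hasSum_range_iff.2 ho
  refine he.add_isCompl ?_ ho
  have h1 : Set.range (fun k : ℤ => 2*k) = {n : ℤ | Even n} := by
    ext n; constructor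
    · rintro ⟨k, rfl⟩; exact ⟨k, by ring⟩
    · rintro ⟨k, rfl⟩; exact ⟨k, by ring⟩
  have h2 : Set.range (fun k : ℤ => 2*k+1) = {n : ℤ | Odd n} := by
    ext n; constructor
    · rintro ⟨k, rfl⟩; exact ⟨k, by ring⟩
    · rintro ⟨k, hk⟩; exact ⟨k, by dsimp; omega⟩
  rw [h1, h2]
  exact Int.isCompl_even_odd

lemma norm_one_sub_exp_sq (ξ : ℝ) :
    ‖(1 : ℂ) - Complex.exp (-(Complex.I * ξ))‖ ^ 2 = 4 * Real.sin (ξ / 2) ^ 2 := by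
  have h1 : (1 : ℂ) - Complex.exp (-(Complex.I * ξ)) =
      Complex.ofReal (1 - Real.cos ξ) + Complex.ofReal (Real.sin ξ) * Complex.I := by
    rw [show -(Complex.I * (ξ:ℂ)) = ((-ξ : ℝ) : ℂ) * Complex.I by push_cast; ring,
      Complex.exp_mul_I]
    push_cast
    simp [Complex.cos_neg, Complex.sin_neg]
    ring
  rw [h1]
  rw [Complex.sq_norm, Complex.normSq_add_mul_I]
  have h2 : Real.sin (ξ/2) ^ 2 = 1/2 - Real.cos ξ / 2 := by
    have := Real.sin_sq_eq_half_sub (ξ/2)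
    rwa [show 2*(ξ/2) = ξ by ring] at this
  have h3 := Real.sin_sq_add_cos_sq ξ
  nlinarith

lemma diff_tsum_le (ω : ℝ) (f : ℤ → ℂ) (hf : IsPaleyWienerZ ω f) :
    ∑' n : ℤ, ‖f n - f (n + 1)‖ ^ 2 ≤ ω * ∑' n : ℤ, ‖f n‖ ^ 2 := by
  obtain ⟨hsum, F, hF2, hFsupp, hFcoef⟩ := hf
  have hπ := Real.pi_pos
  haveI : Fact ((0:ℝ) < 2 * π) := ⟨by positivity⟩
  set μ : Measure ℝ := volume.restrict (Ioc (-π) (-π + 2*π)) with hμdef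
  haveI : IsFiniteMeasure μ := ⟨by
    rw [hμdef, Measure.restrict_apply_univ]; exact measure_Ioc_lt_top⟩
  have hres : volume.restrict (Ico (-π) π) = μ := by
    rw [hμdef, show -π + 2*π = π by ring]
    exact Measure.restrict_congr_set Ico_ae_eq_Ioc
  rw [hres] at hF2 hFsupp hFcoef
  -- measurable representative
  have hFm : AEStronglyMeasurable F μ := hF2.aestronglyMeasurable
  set F₀ : ℝ → ℂ := hFm.mk F with hF₀def
  have hF₀sm : StronglyMeasurable F₀ := hFm.stronglyMeasurable_mk
  have hFae : F =ᵐ[μ] F₀ := hFm.ae_eq_mk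
  have hF₀2 : MemLp F₀ 2 μ := hF2.ae_eq hFae
  -- the multiplier
  set m : ℝ → ℂ := fun ξ => 1 - Complex.exp (-(Complex.I * ξ)) with hmdef
  have hm_cont : Continuous m := by
    apply continuous_const.sub
    exact Complex.continuous_exp.comp (by fun_prop)
  have hm_bd : ∀ ξ : ℝ, ‖m ξ‖ ≤ 2 := by
    intro ξ
    have h1 : ‖Complex.exp (-(Complex.I * ξ))‖ = 1 := by
      rw [show -(Complex.I * (ξ:ℂ)) = ((-ξ : ℝ) : ℂ) * Complex.I by push_cast; ring,
        Complex.norm_exp_ofReal_mul_I]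
    calc ‖m ξ‖ ≤ ‖(1:ℂ)‖ + ‖Complex.exp (-(Complex.I * ξ))‖ := norm_sub_le _ _
    _ ≤ 2 := by rw [h1]; norm_num
  set G₀ : ℝ → ℂ := fun ξ => m ξ * F₀ ξ with hG₀def
  have hG₀sm : StronglyMeasurable G₀ := hm_cont.stronglyMeasurable.mul hF₀sm
  have hG₀2 : MemLp G₀ 2 μ := by
    refine MemLp.of_le (hF₀2.const_mul (2:ℂ)) hG₀sm.aestronglyMeasurable ?_
    refine Filter.Eventually.of_forall fun x => ?_
    rw [hG₀def]
    simp only [norm_mul]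
    calc ‖m x‖ * ‖F₀ x‖ ≤ 2 * ‖F₀ x‖ :=
          mul_le_mul_of_nonneg_right (hm_bd x) (norm_nonneg _)
    _ = ‖(2:ℂ)‖ * ‖F₀ x‖ := by norm_num
  -- fourier exponentials
  have hfour : ∀ (k : ℤ) (x : ℝ), (fourier (-k) (x : AddCircle (2*π)) : ℂ)
      = Complex.exp (-(Complex.I * k * x)) := by
    intro k x
    rw [fourier_coe_apply]
    congr 1
    have hπ' : (π : ℂ) ≠ 0 := Complex.ofReal_ne_zero.mpr Real.pi_ne_zero
    push_cast
    field_simp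
  -- fourier coefficients of lifts
  have key : ∀ (k : ℤ) (φ : ℝ → ℂ), fourierCoeff (AddCircle.liftIoc (2*π) (-π) φ) k
      = (1/(2*π) : ℝ) • ∫ x in Ioc (-π) (-π + 2*π), Complex.exp (-(Complex.I * k * x)) * φ x := by
    intro k φ
    rw [fourierCoeff_eq_intervalIntegral _ k (-π),
      intervalIntegral.integral_of_le (by linarith : -π ≤ -π + 2*π)]
    congr 1
    refine setIntegral_congr_fun measurableSet_Ioc fun x hx => ?_
    rw [AddCircle.liftIoc_coe_apply hx, hfour k x, smul_eq_mul]
  have hcoefF : ∀ k : ℤ, fourierCoeff (AddCircle.liftIoc (2*π) (-π) F₀) k = f k := by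
    intro k
    rw [key k F₀, hFcoef k, Complex.real_smul]
    push_cast
    congr 1
    refine integral_congr_ae (hFae.mono fun x hx => ?_)
    dsimp only
    rw [hx, mul_comm]
  -- integrability of the integrands
  have hFint : Integrable F₀ μ := hF₀2.integrable (by norm_num)
  have hexpint : ∀ k : ℤ, Integrable (fun x : ℝ => Complex.exp (-(Complex.I * k * x)) * F₀ x) μ := by
    intro k
    refine Integrable.bdd_mul hFint (Continuous.aestronglyMeasurable
      (show Continuous fun x : ℝ => Complex.exp (-(Complex.I * k * x)) by fun_prop))
      (c := 1) (Filter.Eventually.of_forall fun x => ?_)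
    rw [show -(Complex.I * (k:ℂ) * (x:ℂ)) = ((-(k * x) : ℝ) : ℂ) * Complex.I by push_cast; ring,
      Complex.norm_exp_ofReal_mul_I]
  have hcoefG : ∀ k : ℤ, fourierCoeff (AddCircle.liftIoc (2*π) (-π) G₀) k = f k - f (k+1) := by
    intro k
    rw [key k G₀, ← hcoefF k, ← hcoefF (k+1), key k F₀, key (k+1) F₀, ← smul_sub,
      ← integral_sub (hexpint k) (hexpint (k+1))]
    rw [hμdef]
    congr 1
    refine integral_congr_ae (Filter.Eventually.of_forall fun x => ?_)
    dsimp only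
    have hexp : Complex.exp (-(Complex.I * k * x)) * Complex.exp (-(Complex.I * x))
        = Complex.exp (-(Complex.I * ((k:ℤ)+1 : ℤ) * x)) := by
      rw [← Complex.exp_add]; congr 1; push_cast; ring
    calc Complex.exp (-(Complex.I * k * x)) * G₀ x
        = Complex.exp (-(Complex.I * k * x)) * F₀ x -
          (Complex.exp (-(Complex.I * k * x)) * Complex.exp (-(Complex.I * x))) * F₀ x := by
          rw [hG₀def, hmdef]; ring
    _ = Complex.exp (-(Complex.I * k * x)) * F₀ x
          - Complex.exp (-(Complex.I * ((k+1 : ℤ)) * x)) * F₀ x := by rw [hexp]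
  -- Parseval machinery
  have hmp := AddCircle.measurePreserving_mk (2*π) (-π)
  have hhaar : (AddCircle.haarAddCircle : Measure (AddCircle (2*π)))
      = (ENNReal.ofReal (2*π))⁻¹ • (volume : Measure (AddCircle (2*π))) := by
    rw [AddCircle.volume_eq_smul_haarAddCircle, smul_smul,
      ENNReal.inv_mul_cancel (ENNReal.ofReal_pos.mpr (by positivity)).ne' ENNReal.ofReal_ne_top,
      one_smul]
  have parseval : ∀ φ₀ : ℝ → ℂ, StronglyMeasurable φ₀ → MemLp φ₀ 2 μ →
      ∑' n : ℤ, ‖fourierCoeff (AddCircle.liftIoc (2*π) (-π) φ₀) n‖^2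
        = (1/(2*π)) * ∫ x, ‖φ₀ x‖^2 ∂μ := by
    intro φ₀ hφsm hφ2
    set Φ : AddCircle (2*π) → ℂ := AddCircle.liftIoc (2*π) (-π) φ₀ with hΦdef
    have hΦsm : StronglyMeasurable Φ := by
      have : Φ = φ₀ ∘ (fun z => ((AddCircle.measurableEquivIoc (2*π) (-π)) z : ℝ)) := rfl
      rw [this]
      exact hφsm.comp_measurable
        (measurable_subtype_coe.comp (AddCircle.measurableEquivIoc (2*π) (-π)).measurable)
    have hcomp : (fun x : ℝ => Φ (x : AddCircle (2*π))) =ᵐ[μ] φ₀ := by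
      filter_upwards [ae_restrict_mem measurableSet_Ioc] with x hx
      exact AddCircle.liftIoc_coe_apply hx
    have hΦvol : MemLp Φ 2 (volume : Measure (AddCircle (2*π))) := by
      rw [← hmp.map_eq]
      refine (memLp_map_measure_iff ?_ AddCircle.measurable_mk'.aemeasurable).2 ?_
      · rw [hmp.map_eq]; exact hΦsm.aestronglyMeasurable
      · exact hφ2.ae_eq hcomp.symm
    have hΦmem : MemLp Φ 2 (AddCircle.haarAddCircle : Measure (AddCircle (2*π))) := by
      rw [hhaar]
      exact hΦvol.smul_measure
        (ENNReal.inv_ne_top.mpr (ENNReal.ofReal_pos.mpr (by positivity)).ne')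
    have hLe : (hΦmem.toLp Φ : AddCircle (2*π) → ℂ) =ᵐ[AddCircle.haarAddCircle] Φ := hΦmem.coeFn_toLp
    calc ∑' n : ℤ, ‖fourierCoeff Φ n‖^2
        = ∑' n : ℤ, ‖fourierCoeff (hΦmem.toLp Φ : AddCircle (2*π) → ℂ) n‖^2 := by
          refine tsum_congr fun n => ?_
          have hc : fourierCoeff (hΦmem.toLp Φ : AddCircle (2*π) → ℂ) n = fourierCoeff Φ n :=
            integral_congr_ae (hLe.mono fun x hx => by simp only at hx ⊢; rw [hx])
          rw [hc]
    _ = ∫ t, ‖(hΦmem.toLp Φ : AddCircle (2*π) → ℂ) t‖^2 ∂AddCircle.haarAddCircle :=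
          tsum_sq_fourierCoeff _
    _ = ∫ t, ‖Φ t‖^2 ∂AddCircle.haarAddCircle :=
          integral_congr_ae (hLe.mono fun x hx => by simp only at hx ⊢; rw [hx])
    _ = (1/(2*π)) * ∫ x, ‖φ₀ x‖^2 ∂μ := by
          rw [hhaar, integral_smul_measure]
          rw [ENNReal.toReal_inv, ENNReal.toReal_ofReal (by positivity)]
          rw [← AddCircle.integral_preimage (2*π) (-π) (fun t => ‖Φ t‖^2)]
          rw [smul_eq_mul, one_div]
          congr 1
          exact integral_congr_ae (hcomp.mono fun x hx => by simp only at hx ⊢; rw [hx])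
  have hPF := parseval F₀ hF₀sm hF₀2
  have hPG := parseval G₀ hG₀sm hG₀2
  simp only [hcoefF] at hPF
  simp only [hcoefG] at hPG
  -- integrability of squares
  have hF₀int : Integrable (fun x => ‖F₀ x‖^2) μ := hF₀2.norm.integrable_sq
  have hG₀int : Integrable (fun x => ‖G₀ x‖^2) μ := hG₀2.norm.integrable_sq
  -- pointwise bound
  have hptwise : ∀ᵐ ξ ∂μ, ‖G₀ ξ‖^2 ≤ ω * ‖F₀ ξ‖^2 := by
    filter_upwards [hFsupp, hFae] with ξ h1 h2
    have hnorm : ‖G₀ ξ‖^2 = (4 * Real.sin (ξ/2)^2) * ‖F₀ ξ‖^2 := by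
      rw [hG₀def]
      simp only [norm_mul, mul_pow]
      rw [hmdef]
      rw [norm_one_sub_exp_sq]
    by_cases hc : 4 * Real.sin (ξ/2)^2 ≤ ω
    · rw [hnorm]
      exact mul_le_mul_of_nonneg_right hc (by positivity)
    · have h0 : F ξ = 0 := h1 (lt_of_not_ge hc)
      rw [hnorm, ← h2, h0]
      simp
  have hint_le : ∫ x, ‖G₀ x‖^2 ∂μ ≤ ω * ∫ x, ‖F₀ x‖^2 ∂μ := by
    rw [← integral_const_mul]
    exact integral_mono_ae hG₀int (hF₀int.const_mul ω) hptwise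
  rw [hPG, hPF]
  have h2π : (0:ℝ) < 1/(2*π) := by positivity
  calc 1/(2*π) * ∫ x, ‖G₀ x‖^2 ∂μ ≤ 1/(2*π) * (ω * ∫ x, ‖F₀ x‖^2 ∂μ) :=
        mul_le_mul_of_nonneg_left hint_le h2π.le
  _ = ω * (1/(2*π) * ∫ x, ‖F₀ x‖^2 ∂μ) := by ring

/-- Let `0 < ω < 2` and let `α > 0` be such that
`γ = ((1+α)/α)·(ω/2) < 1`.  Then for every `f ∈ PW_ω(ℤ)`,
`((1−γ)/(1+α))·∑_{n∈ℤ} |f(n)|² ≤ ∑_{j even} (1/2)·|f(j) + f(j+1)|² ≤ ∑_{n∈ℤ} |f(n)|²`,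
where the middle sum runs over all even integers `j = 2j'`. -/
theorem stmt_19 (ω : ℝ) (hω0 : 0 < ω) (hω2 : ω < 2) (α : ℝ) (hα : 0 < α)
    (hγ : (1 + α) / α * (ω / 2) < 1) (f : ℤ → ℂ) (hf : IsPaleyWienerZ ω f) :
    ((1 - (1 + α) / α * (ω / 2)) / (1 + α) * ∑' n : ℤ, ‖f n‖ ^ 2 ≤
        ∑' j : ℤ, 1 / 2 * ‖f (2 * j) + f (2 * j + 1)‖ ^ 2) ∧
      ∑' j : ℤ, 1 / 2 * ‖f (2 * j) + f (2 * j + 1)‖ ^ 2 ≤ ∑' n : ℤ, ‖f n‖ ^ 2 := by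
  have hs : Summable (fun n : ℤ => ‖f n‖ ^ 2) := hf.1
  have hinj2 : Function.Injective (fun k : ℤ => 2*k) := fun a b h => by dsimp at h; omega
  have hinj2' : Function.Injective (fun k : ℤ => 2*k+1) := fun a b h => by dsimp at h; omega
  have hinjsh : Function.Injective (fun k : ℤ => k+1) := fun a b h => by dsimp at h; omega
  have hs2 : Summable (fun j : ℤ => ‖f (2*j)‖^2) := hs.comp_injective hinj2
  have hs2' : Summable (fun j : ℤ => ‖f (2*j+1)‖^2) := hs.comp_injective hinj2'
  have hpar : ∀ j : ℤ, 1/2 * ‖f (2*j) + f (2*j+1)‖^2 + 1/2 * ‖f (2*j) - f (2*j+1)‖^2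
      = ‖f (2*j)‖^2 + ‖f (2*j+1)‖^2 := by
    intro j
    linear_combination (parallelogram_law_with_norm ℂ (f (2*j)) (f (2*j+1))) / 2
  have hA : Summable (fun j : ℤ => 1/2 * ‖f (2*j) + f (2*j+1)‖^2) := by
    refine Summable.of_nonneg_of_le (fun j => by positivity) (fun j => ?_) (hs2.add hs2')
    have h1 := hpar j
    have h2 : (0:ℝ) ≤ 1/2 * ‖f (2*j) - f (2*j+1)‖^2 := by positivity
    linarith
  have hB : Summable (fun j : ℤ => 1/2 * ‖f (2*j) - f (2*j+1)‖^2) := by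
    refine Summable.of_nonneg_of_le (fun j => by positivity) (fun j => ?_) (hs2.add hs2')
    have h1 := hpar j
    have h2 : (0:ℝ) ≤ 1/2 * ‖f (2*j) + f (2*j+1)‖^2 := by positivity
    linarith
  have hAB : (∑' j : ℤ, 1/2 * ‖f (2*j) + f (2*j+1)‖^2)
      + (∑' j : ℤ, 1/2 * ‖f (2*j) - f (2*j+1)‖^2) = ∑' n : ℤ, ‖f n‖^2 := by
    calc (∑' j : ℤ, 1/2 * ‖f (2*j) + f (2*j+1)‖^2)
          + (∑' j : ℤ, 1/2 * ‖f (2*j) - f (2*j+1)‖^2)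
        = ∑' j : ℤ, (1/2 * ‖f (2*j) + f (2*j+1)‖^2 + 1/2 * ‖f (2*j) - f (2*j+1)‖^2) :=
          (Summable.tsum_add hA hB).symm
    _ = ∑' j : ℤ, (‖f (2*j)‖^2 + ‖f (2*j+1)‖^2) := tsum_congr hpar
    _ = (∑' j : ℤ, ‖f (2*j)‖^2) + (∑' j : ℤ, ‖f (2*j+1)‖^2) := Summable.tsum_add hs2 hs2'
    _ = ∑' n : ℤ, ‖f n‖^2 := (int_even_add_odd (f := fun n : ℤ => ‖f n‖^2) hs2.hasSum hs2'.hasSum).tsum_eq.symm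
  have hBnn : 0 ≤ ∑' j : ℤ, 1/2 * ‖f (2*j) - f (2*j+1)‖^2 :=
    tsum_nonneg fun j => by positivity
  have hstot : 0 ≤ ∑' n : ℤ, ‖f n‖^2 := tsum_nonneg fun n => by positivity
  constructor
  · -- lower bound
    have hd : Summable (fun n : ℤ => ‖f n - f (n+1)‖^2) := by
      refine Summable.of_nonneg_of_le (fun n => by positivity) (fun n => ?_)
        ((hs.mul_left 2).add ((hs.comp_injective hinjsh).mul_left 2))
      simp only [Function.comp]
      have h1 := norm_sub_le (f n) (f (n+1))
      have h2 : ‖f n - f (n+1)‖^2 ≤ (‖f n‖ + ‖f (n+1)‖)^2 :=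
        pow_le_pow_left₀ (norm_nonneg _) h1 2
      nlinarith [sq_nonneg (‖f n‖ - ‖f (n+1)‖), h2]
    have hBd : (∑' j : ℤ, 1/2 * ‖f (2*j) - f (2*j+1)‖^2)
        ≤ 1/2 * ∑' n : ℤ, ‖f n - f (n+1)‖^2 := by
      calc (∑' j : ℤ, 1/2 * ‖f (2*j) - f (2*j+1)‖^2)
          = 1/2 * ∑' j : ℤ, ‖f (2*j) - f (2*j+1)‖^2 := tsum_mul_left
      _ ≤ 1/2 * ∑' n : ℤ, ‖f n - f (n+1)‖^2 := by
          refine mul_le_mul_of_nonneg_left ?_ (by norm_num)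
          exact Summable.tsum_le_tsum_of_inj (fun j : ℤ => 2*j) hinj2 (fun c _ => by positivity)
            (fun j => le_rfl) (hd.comp_injective hinj2) hd
    have hdiff := diff_tsum_le ω f hf
    have hcoef : (1 - (1 + α) / α * (ω / 2)) / (1 + α) ≤ 1 - ω/2 := by
      rw [div_le_iff₀ (show (0:ℝ) < 1+α by linarith)]
      have key2 : α * (1 - (1+α)/α*(ω/2)) ≤ α * ((1-ω/2)*(1+α)) := by
        rw [mul_sub, mul_one, (by field_simp : α * ((1+α)/α*(ω/2)) = (1+α)*(ω/2))]
        nlinarith [mul_nonneg (sq_nonneg α) (show (0:ℝ) ≤ 2-ω by linarith)]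
      exact le_of_mul_le_mul_left key2 hα
    calc (1 - (1 + α) / α * (ω / 2)) / (1 + α) * ∑' n : ℤ, ‖f n‖^2
        ≤ (1 - ω/2) * ∑' n : ℤ, ‖f n‖^2 := mul_le_mul_of_nonneg_right hcoef hstot
    _ ≤ ∑' j : ℤ, 1/2 * ‖f (2*j) + f (2*j+1)‖^2 := by linarith
  · linarith
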